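/- Let g : ℝ → ℝ vanish on (−∞,0] and be a decreasing, convex, nonnegative function on (0,+∞), and set K_t(s) = g(t−s) for t ≥ 0. Then for all 0 ≤ a ≤ b ≤ c ≤ d ≤ r, ∫₀ʳ (K_d(s) − K_c(s)) (K_b(s) − K_a(s)) ds ≤ 0 (assuming the integrals involved are finite). -/

import Mathlib

open MeasureTheory

/-- Negative-correlation lemma: let `g : ℝ → ℝ` vanish on `(-∞, 0]` and be
nonnegative, decreasing and convex on `(0, ∞)`, and set `K_t(s) = g(t - s)`.
Then for `0 ≤ a ≤ b ≤ c ≤ d ≤ r`,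
`∫₀ʳ (K_d(s) - K_c(s)) (K_b(s) - K_a(s)) ds ≤ 0`
(assuming the integrand is integrable). -/
theorem negative_correlation_lemma (g : ℝ → ℝ)
    (hzero : ∀ x : ℝ, x ≤ 0 → g x = 0)
    (hnonneg : ∀ x : ℝ, 0 < x → 0 ≤ g x)
    (hdec : AntitoneOn g (Set.Ioi 0))
    (hconv : ConvexOn ℝ (Set.Ioi 0) g)
    (r a b c d : ℝ) (h0a : 0 ≤ a) (hab : a ≤ b) (hbc : b ≤ c) (hcd : c ≤ d) (hdr : d ≤ r)
    (hint : IntegrableOn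
      (fun s => (g (d - s) - g (c - s)) * (g (b - s) - g (a - s))) (Set.Ioc 0 r)) :
    (∫ s in Set.Ioc (0 : ℝ) r, (g (d - s) - g (c - s)) * (g (b - s) - g (a - s))) ≤ 0 := by
  rcases eq_or_lt_of_le hab with rfl | hab'
  · simp
  have hac : a < c := lt_of_lt_of_le hab' hbc
  have hb0 : 0 < b := lt_of_le_of_lt h0a hab'
  have hbr : b ≤ r := le_trans hbc (le_trans hcd hdr)
  have h0r : (0 : ℝ) ≤ r := le_trans hb0.le hbr
  -- monotonicity of s ↦ g (d - s) - g (c - s)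
  have hmono : ∀ s t : ℝ, s < t → t < c →
      g (d - t) - g (c - t) ≤ g (d - s) - g (c - s) := by
    intro s t hst htc
    have hx1 : (0 : ℝ) < c - t := by linarith
    have hx2 : (0 : ℝ) < c - s := by linarith
    have hy1 : (0 : ℝ) < d - t := by linarith
    have hy2 : (0 : ℝ) < d - s := by linarith
    have hts : (0 : ℝ) < t - s := by linarith
    have h1 := hconv.secant_mono (Set.mem_Ioi.2 hx1) (Set.mem_Ioi.2 hx2)
      (Set.mem_Ioi.2 hy2) (ne_of_gt (by linarith)) (ne_of_gt (by linarith)) (by linarith)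
    have h2 := hconv.secant_mono (Set.mem_Ioi.2 hy2) (Set.mem_Ioi.2 hx1)
      (Set.mem_Ioi.2 hy1) (ne_of_lt (by linarith)) (ne_of_lt (by linarith)) (by linarith)
    -- h1 : (g (c-s) - g (c-t)) / ((c-s) - (c-t)) ≤ (g (d-s) - g (c-t)) / ((d-s) - (c-t))
    -- h2 : (g (c-t) - g (d-s)) / ((c-t) - (d-s)) ≤ (g (d-t) - g (d-s)) / ((d-t) - (d-s))
    have hmid : (g (d - s) - g (c - t)) / ((d - s) - (c - t))
        = (g (c - t) - g (d - s)) / ((c - t) - (d - s)) := by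
      rw [← neg_div_neg_eq]; ring_nf
    have h2' : (g (d - t) - g (d - s)) / ((d - t) - (d - s))
        = (g (d - s) - g (d - t)) / (t - s) := by
      rw [← neg_div_neg_eq]; ring_nf
    have h1' : (g (c - s) - g (c - t)) / ((c - s) - (c - t))
        = (g (c - s) - g (c - t)) / (t - s) := by ring_nf
    rw [h1', hmid] at h1
    rw [h2'] at h2
    have key : (g (c - s) - g (c - t)) / (t - s) ≤ (g (d - s) - g (d - t)) / (t - s) :=
      le_trans h1 h2
    have := (div_le_div_iff_of_pos_right hts).1 key
    linarith
  have hψa_nonpos : g (d - a) - g (c - a) ≤ 0 :=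
    sub_nonpos.2 (hdec (Set.mem_Ioi.2 (by linarith)) (Set.mem_Ioi.2 (by linarith)) (by linarith))
  -- key pointwise bound
  have keyPointwise : ∀ s ∈ Set.Ioc (0 : ℝ) r,
      (g (d - s) - g (c - s)) * (g (b - s) - g (a - s))
        ≤ (g (d - a) - g (c - a)) * (g (b - s) - g (a - s)) := by
    rintro s ⟨hs0, hsr⟩
    rcases lt_trichotomy s a with hsa | rfl | has
    · have hψ : g (d - a) - g (c - a) ≤ g (d - s) - g (c - s) := hmono s a hsa hac
      have hφ : g (b - s) - g (a - s) ≤ 0 :=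
        sub_nonpos.2 (hdec (Set.mem_Ioi.2 (by linarith)) (Set.mem_Ioi.2 (by linarith))
          (by linarith))
      exact mul_le_mul_of_nonpos_right hψ hφ
    · exact le_rfl
    · by_cases hsb : s < b
      · have hψ : g (d - s) - g (c - s) ≤ g (d - a) - g (c - a) :=
          hmono a s has (lt_of_lt_of_le hsb hbc)
        have hφ : 0 ≤ g (b - s) - g (a - s) := by
          rw [hzero (a - s) (by linarith), sub_zero]
          exact hnonneg _ (by linarith)
        exact mul_le_mul_of_nonneg_right hψ hφ
      · have hφ : g (b - s) - g (a - s) = 0 := by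
          rw [hzero (b - s) (by linarith), hzero (a - s) (by linarith), sub_self]
        rw [hφ, mul_zero, mul_zero]
  rcases lt_or_eq_of_le hψa_nonpos with hψa | hψa0
  swap
  · -- degenerate case: the pointwise bound is zero
    refine setIntegral_nonpos measurableSet_Ioc fun s hs => ?_
    have := keyPointwise s hs
    rw [hψa0, zero_mul] at this
    exact this
  -- main case : g (d - a) - g (c - a) < 0
  have hk : 0 < g (c - a) - g (d - a) := by linarith
  have hgcont : ContinuousOn g (Set.Ioi 0) := hconv.continuousOn isOpen_Ioi
  have hmeas : AEStronglyMeasurable (fun s => g (b - s))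
      (volume.restrict (Set.Ioc a b)) := by
    rw [← Measure.restrict_congr_set Ioo_ae_eq_Ioc]
    refine (ContinuousOn.aemeasurable ?_ measurableSet_Ioo).aestronglyMeasurable
    exact hgcont.comp ((continuous_const.sub continuous_id).continuousOn)
      (fun s hs => Set.mem_Ioi.2 (by linarith [hs.2]))
  have hFab : IntegrableOn
      (fun s => (g (d - s) - g (c - s)) * (g (b - s) - g (a - s))) (Set.Ioc a b) :=
    hint.mono_set (Set.Ioc_subset_Ioc h0a hbr)
  -- integrability of s ↦ g (b - s) on (a, b]
  have h1 : IntegrableOn (fun s => g (b - s)) (Set.Ioc a b) := by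
    refine Integrable.mono (hFab.const_mul ((g (c - a) - g (d - a))⁻¹)) hmeas ?_
    refine (ae_restrict_iff' measurableSet_Ioc).2 (ae_of_all _ ?_)
    rintro s ⟨hsa, hsb⟩
    rcases eq_or_lt_of_le hsb with rfl | hsb'
    · simp only [sub_self, hzero 0 le_rfl, norm_zero]
      positivity
    · have hφ0 : g (a - s) = 0 := hzero _ (by linarith)
      have hψs : g (d - s) - g (c - s) ≤ g (d - a) - g (c - a) :=
        hmono a s hsa (lt_of_lt_of_le hsb' hbc)
      have hgbs : 0 ≤ g (b - s) := hnonneg _ (by linarith)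
      have hprod : (g (c - a) - g (d - a)) * g (b - s)
          ≤ -((g (d - s) - g (c - s)) * (g (b - s) - g (a - s))) := by
        rw [hφ0, sub_zero]
        nlinarith [mul_le_mul_of_nonneg_right hψs hgbs]
      have habs : (g (c - a) - g (d - a)) * g (b - s)
          ≤ |(g (d - s) - g (c - s)) * (g (b - s) - g (a - s))| :=
        le_trans hprod (neg_le_abs _)
      rw [Real.norm_eq_abs, Real.norm_eq_abs, abs_of_nonneg hgbs, abs_mul,
        abs_of_pos (inv_pos.2 hk)]
      calc g (b - s) = (g (c - a) - g (d - a))⁻¹ * ((g (c - a) - g (d - a)) * g (b - s)) := by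
            field_simp
        _ ≤ (g (c - a) - g (d - a))⁻¹
              * |(g (d - s) - g (c - s)) * (g (b - s) - g (a - s))| :=
            mul_le_mul_of_nonneg_left habs (inv_pos.2 hk).le
  -- build interval integrability of all the pieces
  have I1 : IntervalIntegrable (fun s => g (b - s)) volume a b :=
    (intervalIntegrable_iff_integrableOn_Ioc_of_le hab'.le).2 h1
  have I2 : IntervalIntegrable g volume 0 (b - a) := by
    have := (I1.comp_sub_left b).symm
    simpa using this
  have I3 : IntervalIntegrable g volume (b - a) b := by
    refine AntitoneOn.intervalIntegrable (hdec.mono ?_)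
    rw [Set.uIcc_of_le (by linarith)]
    exact fun x hx => lt_of_lt_of_le (by linarith) hx.1
  have I4 : IntervalIntegrable g volume 0 b := I2.trans I3
  have I5 : IntervalIntegrable (fun s => g (b - s)) volume 0 b := by
    have := (I4.comp_sub_left b).symm
    simpa using this
  have I6 : IntervalIntegrable g volume (a - b) 0 := by
    rw [intervalIntegrable_iff]
    refine integrableOn_zero.congr_fun ?_ measurableSet_uIoc
    intro x hx
    rw [Set.uIoc_of_le (show a - b ≤ 0 by linarith)] at hx
    exact (hzero x hx.2).symm
  have I7 : IntervalIntegrable g volume 0 a := by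
    refine I4.mono_set ?_
    rw [Set.uIcc_of_le h0a, Set.uIcc_of_le hb0.le]
    exact Set.Icc_subset_Icc le_rfl hab'.le
  have I8 : IntervalIntegrable g volume (a - b) a := I6.trans I7
  have I9 : IntervalIntegrable (fun s => g (a - s)) volume 0 b := by
    have := (I8.comp_sub_left a).symm
    simpa using this
  have I11b : IntervalIntegrable (fun s => g (b - s)) volume b r := by
    rw [intervalIntegrable_iff]
    refine integrableOn_zero.congr_fun ?_ measurableSet_uIoc
    intro x hx
    rw [Set.uIoc_of_le hbr] at hx
    exact (hzero (b - x) (by linarith [hx.1])).symm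
  have I11a : IntervalIntegrable (fun s => g (a - s)) volume b r := by
    rw [intervalIntegrable_iff]
    refine integrableOn_zero.congr_fun ?_ measurableSet_uIoc
    intro x hx
    rw [Set.uIoc_of_le hbr] at hx
    exact (hzero (a - x) (by linarith [hx.1])).symm
  have Jb : IntervalIntegrable (fun s => g (b - s)) volume 0 r := I5.trans I11b
  have Ja : IntervalIntegrable (fun s => g (a - s)) volume 0 r := I9.trans I11a
  have Jφ : IntervalIntegrable (fun s => g (b - s) - g (a - s)) volume 0 r := Jb.sub Ja
  have hφr : IntegrableOn (fun s => g (b - s) - g (a - s)) (Set.Ioc 0 r) :=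
    (intervalIntegrable_iff_integrableOn_Ioc_of_le h0r).1 Jφ
  -- computation of ∫ φ
  have Izb : IntervalIntegrable g volume (b - r) 0 := by
    rw [intervalIntegrable_iff]
    refine integrableOn_zero.congr_fun ?_ measurableSet_uIoc
    intro x hx
    rw [Set.uIoc_of_le (show b - r ≤ 0 by linarith)] at hx
    exact (hzero x hx.2).symm
  have Iza : IntervalIntegrable g volume (a - r) 0 := by
    rw [intervalIntegrable_iff]
    refine integrableOn_zero.congr_fun ?_ measurableSet_uIoc
    intro x hx
    rw [Set.uIoc_of_le (show a - r ≤ 0 by linarith)] at hx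
    exact (hzero x hx.2).symm
  have hzb : (∫ x in (b - r)..(0 : ℝ), g x) = 0 := by
    rw [intervalIntegral.integral_congr (g := fun _ => (0 : ℝ)) ?_]
    · exact intervalIntegral.integral_zero
    · intro x hx
      rw [Set.uIcc_of_le (show b - r ≤ 0 by linarith)] at hx
      exact hzero x hx.2
  have hza : (∫ x in (a - r)..(0 : ℝ), g x) = 0 := by
    rw [intervalIntegral.integral_congr (g := fun _ => (0 : ℝ)) ?_]
    · exact intervalIntegral.integral_zero
    · intro x hx
      rw [Set.uIcc_of_le (show a - r ≤ 0 by linarith)] at hx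
      exact hzero x hx.2
  have hib : (∫ s in (0 : ℝ)..r, g (b - s)) = ∫ u in (0 : ℝ)..b, g u := by
    rw [intervalIntegral.integral_comp_sub_left g b]
    have := intervalIntegral.integral_add_adjacent_intervals Izb I4
    rw [sub_zero]
    rw [← this, hzb, zero_add]
  have hia : (∫ s in (0 : ℝ)..r, g (a - s)) = ∫ u in (0 : ℝ)..a, g u := by
    rw [intervalIntegral.integral_comp_sub_left g a]
    have := intervalIntegral.integral_add_adjacent_intervals Iza I7
    rw [sub_zero]
    rw [← this, hza, zero_add]
  have Iab : IntervalIntegrable g volume a b := by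
    refine I4.mono_set ?_
    rw [Set.uIcc_of_le hab'.le, Set.uIcc_of_le hb0.le]
    exact Set.Icc_subset_Icc h0a le_rfl
  have hsplit : (∫ u in (0 : ℝ)..a, g u) + (∫ u in a..b, g u) = ∫ u in (0 : ℝ)..b, g u :=
    intervalIntegral.integral_add_adjacent_intervals I7 Iab
  have hφnonneg : 0 ≤ ∫ s in Set.Ioc (0 : ℝ) r, (g (b - s) - g (a - s)) := by
    rw [← intervalIntegral.integral_of_le h0r, intervalIntegral.integral_sub Jb Ja,
      hib, hia, ← hsplit]
    have : 0 ≤ ∫ u in a..b, g u := by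
      refine intervalIntegral.integral_nonneg hab'.le fun u hu => ?_
      rcases (h0a.trans hu.1).lt_or_eq with h | h
      · exact hnonneg u h
      · exact le_of_eq (hzero u h.symm.le).symm
    linarith
  calc (∫ s in Set.Ioc (0 : ℝ) r, (g (d - s) - g (c - s)) * (g (b - s) - g (a - s)))
      ≤ ∫ s in Set.Ioc (0 : ℝ) r, (g (d - a) - g (c - a)) * (g (b - s) - g (a - s)) :=
        setIntegral_mono_on hint (hφr.const_mul _) measurableSet_Ioc keyPointwise
    _ = (g (d - a) - g (c - a)) * ∫ s in Set.Ioc (0 : ℝ) r, (g (b - s) - g (a - s)) :=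
        integral_const_mul _ _
    _ ≤ 0 := mul_nonpos_iff.2 (Or.inr ⟨hψa.le, hφnonneg⟩)
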